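/- Let X : Γ^op → Set be a functor from the category of finite pointed sets to sets such that X(**0**) is a singleton and for every n ≥ 2 the Segal map X(**n**) → X(**1**)^n induced by the projections φ_{n,k} is a bijection (and for n = 1 the identity). Then X(**1**) carries a natural commutative monoid structure, with multiplication given by the image under X of the map **2** → **1** sending both 1 and 2 to 1, and unit given by the image of the unique point of X(**0**) under the map induced by **0** → **1**. -/

import Mathlib

open CategoryTheory

/-- Objects of Γ^op: **n** = {0,1,...,n}, encoded by n. -/
abbrev GammaOp := ℕ

/-- Morphisms of Γ^op: basepoint-preserving maps **m** → **n**. -/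
def GHom (m n : ℕ) : Type := {f : Fin (m + 1) → Fin (n + 1) // f 0 = 0}

/-- The category Γ^op of finite pointed sets **n**. -/
instance : Category GammaOp where
  Hom m n := GHom m n
  id _ := ⟨id, rfl⟩
  comp f g := ⟨g.1 ∘ f.1, by simp [Function.comp, f.2, g.2]⟩
  id_comp _ := rfl
  comp_id _ := rfl
  assoc _ _ _ := rfl

/-- Regard a basepoint-preserving map as a morphism of the category Γ^op. -/
def toHom {m n : ℕ} (f : GHom m n) : (m : GammaOp) ⟶ (n : GammaOp) := f

/-- φ_{n,k} : **n** → **1**, i ↦ 1 if i = k, else 0 (`phi k` is φ_{n,k+1} for `k : Fin n`). -/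
def phi {n : ℕ} (k : Fin n) : GHom n 1 :=
  ⟨fun i => if i = k.succ then 1 else 0,
    by simp [(Fin.succ_ne_zero k).symm, Fin.ext_iff]⟩

/-- The fold map **2** → **1** sending both 1 and 2 to 1. -/
def fold : GHom 2 1 := ⟨fun i => if i = 0 then 0 else 1, rfl⟩

/-- The unique map **0** → **1**. -/
def zeroToOne : GHom 0 1 := ⟨fun _ => 0, rfl⟩

namespace SGHelper

variable (X : GammaOp ⥤ Type)

lemma map_map {l m n : ℕ} (f : GHom l m) (g : GHom m n) (h : GHom l n)
    (hh : g.1 ∘ f.1 = h.1) (x : X.obj l) :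
    X.map (toHom g) (X.map (toHom f) x) = X.map (toHom h) x := by
  have hcomp : toHom f ≫ toHom g = toHom h := Subtype.ext hh
  rw [← types_comp_apply (X.map (toHom f)) (X.map (toHom g)), ← X.map_comp, hcomp]

lemma map_id' (f : GHom 1 1) (hf : f.1 = id) (x : X.obj 1) :
    X.map (toHom f) x = x := by
  have : toHom f = 𝟙 (1 : GammaOp) := Subtype.ext hf
  rw [this, X.map_id]; rfl

variable {X}
variable (h2 : Function.Bijective
  (fun (x : X.obj 2) (k : Fin 2) => X.map (toHom (phi k)) x))

noncomputable def e2 : X.obj 2 ≃ (Fin 2 → X.obj 1) := Equiv.ofBijective _ h2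

lemma e2_symm_spec (v : Fin 2 → X.obj 1) (k : Fin 2) :
    X.map (toHom (phi k)) ((e2 h2).symm v) = v k :=
  congrFun ((e2 h2).apply_symm_apply v) k

lemma e2_symm_eq (v : Fin 2 → X.obj 1) (s : X.obj 2)
    (H0 : X.map (toHom (phi 0)) s = v 0) (H1 : X.map (toHom (phi 1)) s = v 1) :
    (e2 h2).symm v = s := by
  rw [Equiv.symm_apply_eq]
  funext k
  fin_cases k
  · exact H0.symm
  · exact H1.symm

/-- The multiplication on X(**1**). -/
noncomputable def mul (a b : X.obj 1) : X.obj 1 :=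
  X.map (toHom fold) ((e2 h2).symm ![a, b])

/-- The swap map **2** → **2**. -/
def sw : GHom 2 2 := ⟨![0, 2, 1], rfl⟩

lemma mul_comm' (a b : X.obj 1) : mul h2 a b = mul h2 b a := by
  have key : (e2 h2).symm ![b, a] = X.map (toHom sw) ((e2 h2).symm ![a, b]) := by
    refine e2_symm_eq h2 _ _ ?_ ?_
    · rw [map_map X sw (phi 0) (phi 1) (by decide)]
      exact e2_symm_spec h2 ![a, b] 1
    · rw [map_map X sw (phi 1) (phi 0) (by decide)]
      exact e2_symm_spec h2 ![a, b] 0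
  show mul h2 a b = X.map (toHom fold) ((e2 h2).symm ![b, a])
  rw [key, map_map X sw fold fold (by decide)]
  rfl

/-- Inclusion **1** → **2** hitting the second coordinate. -/
def i1 : GHom 1 2 := ⟨![0, 2], rfl⟩

/-- The unique map **1** → **0**. -/
def oneToZero : GHom 1 0 := ⟨fun _ => 0, rfl⟩

lemma one_mul' (h0 : Subsingleton (X.obj 0)) (pt : X.obj 0) (a : X.obj 1) :
    mul h2 (X.map (toHom zeroToOne) pt) a = a := by
  have hs : (e2 h2).symm ![X.map (toHom zeroToOne) pt, a] = X.map (toHom i1) a := by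
    refine e2_symm_eq h2 _ _ ?_ ?_
    · rw [map_map X i1 (phi 0) ⟨fun _ => 0, rfl⟩ (by decide),
        ← map_map X oneToZero zeroToOne ⟨fun _ => 0, rfl⟩ (by decide)]
      show X.map (toHom zeroToOne) (X.map (toHom oneToZero) a)
        = X.map (toHom zeroToOne) pt
      have hpt : X.map (toHom oneToZero) a = pt := @Subsingleton.elim _ h0 _ _
      rw [hpt]
    · rw [map_map X i1 (phi 1) (⟨id, rfl⟩ : GHom 1 1) (by decide), map_id' X (⟨id, rfl⟩ : GHom 1 1) rfl]
      rfl
  show X.map (toHom fold) ((e2 h2).symm ![X.map (toHom zeroToOne) pt, a]) = a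
  rw [hs, map_map X i1 fold (⟨id, rfl⟩ : GHom 1 1) (by decide), map_id' X (⟨id, rfl⟩ : GHom 1 1) rfl]

lemma mul_one' (h0 : Subsingleton (X.obj 0)) (pt : X.obj 0) (a : X.obj 1) :
    mul h2 a (X.map (toHom zeroToOne) pt) = a := by
  rw [mul_comm' h2]; exact one_mul' h2 h0 pt a

section Assoc

variable (h3 : Function.Bijective
  (fun (x : X.obj 3) (k : Fin 3) => X.map (toHom (phi k)) x))

noncomputable def e3 : X.obj 3 ≃ (Fin 3 → X.obj 1) := Equiv.ofBijective _ h3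

lemma e3_symm_spec (v : Fin 3 → X.obj 1) (k : Fin 3) :
    X.map (toHom (phi k)) ((e3 h3).symm v) = v k :=
  congrFun ((e3 h3).apply_symm_apply v) k

/-- Projection **3** → **2** keeping coordinates 1,2. -/
def p12 : GHom 3 2 := ⟨![0, 1, 2, 0], rfl⟩

/-- Projection **3** → **2** keeping coordinates 2,3. -/
def p23 : GHom 3 2 := ⟨![0, 0, 1, 2], rfl⟩

/-- The map **3** → **2** folding coordinates 1,2. -/
def m12 : GHom 3 2 := ⟨![0, 1, 1, 2], rfl⟩

/-- The map **3** → **2** folding coordinates 2,3. -/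
def m23 : GHom 3 2 := ⟨![0, 1, 2, 2], rfl⟩

lemma p12_spec (a b c : X.obj 1) :
    (e2 h2).symm ![a, b] = X.map (toHom p12) ((e3 h3).symm ![a, b, c]) := by
  refine e2_symm_eq h2 _ _ ?_ ?_
  · rw [map_map X p12 (phi 0) (phi (0 : Fin 3)) (by decide)]
    exact e3_symm_spec h3 ![a, b, c] 0
  · rw [map_map X p12 (phi 1) (phi (1 : Fin 3)) (by decide)]
    exact e3_symm_spec h3 ![a, b, c] 1

lemma p23_spec (a b c : X.obj 1) :
    (e2 h2).symm ![b, c] = X.map (toHom p23) ((e3 h3).symm ![a, b, c]) := by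
  refine e2_symm_eq h2 _ _ ?_ ?_
  · rw [map_map X p23 (phi 0) (phi (1 : Fin 3)) (by decide)]
    exact e3_symm_spec h3 ![a, b, c] 1
  · rw [map_map X p23 (phi 1) (phi (2 : Fin 3)) (by decide)]
    exact e3_symm_spec h3 ![a, b, c] 2

lemma m12_spec (a b c : X.obj 1) :
    (e2 h2).symm ![mul h2 a b, c] = X.map (toHom m12) ((e3 h3).symm ![a, b, c]) := by
  refine e2_symm_eq h2 _ _ ?_ ?_
  · rw [map_map X m12 (phi 0) ⟨![0, 1, 1, 0], rfl⟩ (by decide),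
      ← map_map X p12 fold ⟨![0, 1, 1, 0], rfl⟩ (by decide), ← p12_spec h2 h3 a b c]
    rfl
  · rw [map_map X m12 (phi 1) (phi (2 : Fin 3)) (by decide)]
    exact e3_symm_spec h3 ![a, b, c] 2

lemma m23_spec (a b c : X.obj 1) :
    (e2 h2).symm ![a, mul h2 b c] = X.map (toHom m23) ((e3 h3).symm ![a, b, c]) := by
  refine e2_symm_eq h2 _ _ ?_ ?_
  · rw [map_map X m23 (phi 0) (phi (0 : Fin 3)) (by decide)]
    exact e3_symm_spec h3 ![a, b, c] 0
  · rw [map_map X m23 (phi 1) ⟨![0, 0, 1, 1], rfl⟩ (by decide),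
      ← map_map X p23 fold ⟨![0, 0, 1, 1], rfl⟩ (by decide), ← p23_spec h2 h3 a b c]
    rfl

end Assoc

lemma mul_assoc' (h3 : Function.Bijective
      (fun (x : X.obj 3) (k : Fin 3) => X.map (toHom (phi k)) x)) (a b c : X.obj 1) :
    mul h2 (mul h2 a b) c = mul h2 a (mul h2 b c) := by
  show X.map (toHom fold) ((e2 h2).symm ![mul h2 a b, c])
    = X.map (toHom fold) ((e2 h2).symm ![a, mul h2 b c])
  rw [m12_spec h2 h3 a b c, m23_spec h2 h3 a b c,
    map_map X m12 fold ⟨![0, 1, 1, 1], rfl⟩ (by decide),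
    map_map X m23 fold ⟨![0, 1, 1, 1], rfl⟩ (by decide)]

end SGHelper

/-- If X : Γ^op → Set has X(**0**) a singleton and all Segal maps
X(**n**) → X(**1**)^n (n ≥ 2) bijective, then X(**1**) carries a natural
commutative monoid structure: multiplication is induced by the fold map
**2** → **1**, and the unit is the image of the point of X(**0**) under the map
induced by **0** → **1**. -/
theorem strict_gamma_set_comm_monoid (X : GammaOp ⥤ Type)
    (h0 : Subsingleton (X.obj 0)) (pt : X.obj 0)
    (hSegal : ∀ n : ℕ, 2 ≤ n →
      Function.Bijective (fun (x : X.obj n) (k : Fin n) => X.map (toHom (phi k)) x)) :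
    ∃ M : CommMonoid (X.obj 1),
      (∀ s : X.obj 2,
        M.mul (X.map (toHom (phi (0 : Fin 2))) s) (X.map (toHom (phi (1 : Fin 2))) s)
          = X.map (toHom fold) s) ∧
      M.one = X.map (toHom zeroToOne) pt := by
  have h2 := hSegal 2 (by norm_num)
  have h3 := hSegal 3 (by norm_num)
  refine ⟨{ mul := SGHelper.mul h2
            one := X.map (toHom zeroToOne) pt
            mul_assoc := SGHelper.mul_assoc' h2 h3
            one_mul := SGHelper.one_mul' h2 h0 pt
            mul_one := SGHelper.mul_one' h2 h0 pt
            mul_comm := SGHelper.mul_comm' h2 }, ?_, rfl⟩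
  intro s
  show SGHelper.mul h2 _ _ = _
  have hs : (SGHelper.e2 h2).symm
      ![X.map (toHom (phi (0 : Fin 2))) s, X.map (toHom (phi (1 : Fin 2))) s] = s := by
    apply (SGHelper.e2 h2).injective
    rw [Equiv.apply_symm_apply]
    funext k
    fin_cases k <;> rfl
  rw [SGHelper.mul, hs]
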